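/- Let 0 < q < 1 and let μ, ν be real numbers with μ > −1 and ν > −1. Then for all x > 0, the q-derivative at x of the function G(x) := ([μ]_q − [ν]_q)·J_ν^{(3)}(x/q; q²)·J_μ^{(3)}(x/q; q²) + (x/(1−q))·( J_{ν+1}^{(3)}(x; q²)·J_μ^{(3)}(x/q; q²) − J_ν^{(3)}(x/q; q²)·J_{μ+1}^{(3)}(x; q²) ) equals x·( q^{−ν}·[ν−μ]_q/(1−q) + (q^{−μ}·[μ]_q² − q^{−ν}·[ν]_q²)/x² )·J_ν^{(3)}(x; q²)·J_μ^{(3)}(x; q²). -/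

import Mathlib

set_option maxHeartbeats 1000000
open Finset Real


/-- The Jackson `q`-derivative `(D_q f)(x) = (f(x) - f(qx)) / ((1-q)x)`. -/
noncomputable def qDeriv (q : ℝ) (f : ℝ → ℝ) (x : ℝ) : ℝ :=
  (f x - f (q * x)) / ((1 - q) * x)

/-- The finite q-shifted factorial `(z; q)_n`. -/
noncomputable def qPoch (z q : ℝ) (n : ℕ) : ℝ :=
  ∏ k ∈ Finset.range n, (1 - z * q ^ k)

/-- The infinite q-shifted factorial `(z; q)_∞`. -/
noncomputable def qPochInf (z q : ℝ) : ℝ :=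
  ∏' k : ℕ, (1 - z * q ^ k)

/-- The q-bracket `[ν]_q = (1 - q^ν)/(1 - q)` for a real `ν` (rpow). -/
noncomputable def qBracket (q ν : ℝ) : ℝ := (1 - q ^ ν) / (1 - q)

/-- The third Jackson q-Bessel function `J_ν^{(3)}(x; q²)`. -/
noncomputable def J3 (q ν x : ℝ) : ℝ :=
  (qPochInf (q ^ (2 * ν + 2)) (q ^ 2) / qPochInf (q ^ 2) (q ^ 2)) *
    ∑' n : ℕ, ((-1 : ℝ) ^ n * q ^ (n * (n + 1)) * x ^ (2 * (n : ℝ) + ν)) /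
      (qPoch (q ^ 2) (q ^ 2) n *
        ∏ j ∈ Finset.range n, (1 - q ^ (2 * ν + 2 + 2 * (j : ℝ))))

lemma rpow_lt_one' {q : ℝ} (hq : 0 < q) (hq1 : q < 1) {e : ℝ} (he : 0 < e) : q ^ e < 1 :=
  Real.rpow_lt_one hq.le hq1 he

lemma qPoch_q2_pos {q : ℝ} (hq : 0 < q) (hq1 : q < 1) (n : ℕ) : 0 < qPoch (q^2) (q^2) n := by
  apply Finset.prod_pos
  intro k _
  have h1 : (q^2)^k ≤ 1 := pow_le_one₀ (by positivity) (by nlinarith)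
  have h2 : (q^2) * (q^2)^k < 1 := by nlinarith
  linarith

lemma Rprod_pos {q : ℝ} (hq : 0 < q) (hq1 : q < 1) {ν : ℝ} (hν : -1 < ν) (n : ℕ) :
    0 < ∏ j ∈ Finset.range n, (1 - q ^ (2 * ν + 2 + 2 * (j : ℝ))) := by
  apply Finset.prod_pos
  intro j _
  have hj : (0:ℝ) ≤ (j:ℝ) := Nat.cast_nonneg j
  have : q ^ (2 * ν + 2 + 2 * (j : ℝ)) < 1 := rpow_lt_one' hq hq1 (by linarith)
  linarith

lemma summable_log_aux {q z : ℝ} (hq : 0 < q) (hq1 : q < 1) (hz : 0 < z) (hz1 : z < 1) :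
    Summable (fun k : ℕ => Real.log (1 - z * (q^2) ^ k)) := by
  have hQ1 : q^2 < 1 := by nlinarith
  have hQ0 : (0:ℝ) < q^2 := by positivity
  apply Summable.of_norm_bounded (g := fun k => (z / (1 - z)) * (q^2)^k)
    ((summable_geometric_of_lt_one hQ0.le hQ1).mul_left _)
  intro k
  set t := z * (q^2)^k with ht
  have ht0 : 0 < t := by positivity
  have htz : t ≤ z := by
    rw [ht]
    calc z * (q^2)^k ≤ z * 1 := mul_le_mul_of_nonneg_left (pow_le_one₀ hQ0.le hQ1.le) hz.le
      _ = z := mul_one z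
  have h1t : 0 < 1 - t := by linarith
  have h1z : 0 < 1 - z := by linarith
  have hlog_le : Real.log (1 - t) ≤ 0 := Real.log_nonpos (by linarith) (by linarith)
  rw [Real.norm_eq_abs, abs_of_nonpos hlog_le]
  have e1 : -Real.log (1 - t) = Real.log (1 - t)⁻¹ := (Real.log_inv _).symm
  rw [e1]
  have hle : Real.log (1-t)⁻¹ ≤ (1-t)⁻¹ - 1 := Real.log_le_sub_one_of_pos (by positivity)
  have e2 : (1-t)⁻¹ - 1 = t / (1 - t) := by field_simp; ring
  rw [e2] at hle
  refine hle.trans ?_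
  have h3 : t / (1 - t) ≤ t / (1 - z) := by gcongr
  refine h3.trans (le_of_eq ?_)
  rw [ht]; ring

lemma multipliable_aux {q z : ℝ} (hq : 0 < q) (hq1 : q < 1) (hz : 0 < z) (hz1 : z < 1) :
    Multipliable (fun k : ℕ => 1 - z * (q^2) ^ k) := by
  have hfac : ∀ k : ℕ, 0 < 1 - z * (q^2)^k := by
    intro k
    have h1 : (q^2)^k ≤ 1 := pow_le_one₀ (by positivity) (by nlinarith)
    nlinarith
  exact Real.multipliable_of_summable_log (fun n => hfac n) (summable_log_aux hq hq1 hz hz1)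

lemma qPochInf_split {q c : ℝ} (hq : 0 < q) (hq1 : q < 1) (hc : 0 < c) :
    qPochInf (q ^ c) (q^2) = (1 - q ^ c) * qPochInf (q ^ (c + 2)) (q^2) := by
  have hzc : 0 < q ^ c := Real.rpow_pos_of_pos hq c
  have hzc1 : q ^ c < 1 := rpow_lt_one' hq hq1 hc
  have hzc2 : 0 < q ^ (c+2) := Real.rpow_pos_of_pos hq _
  have hzc21 : q ^ (c+2) < 1 := rpow_lt_one' hq hq1 (by linarith)
  have key : ∀ k : ℕ, q ^ c * (q^2) ^ (k+1) = q ^ (c+2) * (q^2) ^ k := by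
    intro k
    have hk : q ^ c * q ^ 2 = q ^ (c+2) := by
      rw [← Real.rpow_natCast q 2, ← Real.rpow_add hq]; norm_num
    rw [pow_succ, show q ^ c * ((q^2)^k * q^2) = (q ^ c * q ^ 2) * (q^2)^k from by ring, hk]
  have hm : Multipliable (fun k : ℕ => (1 - q ^ c * (q^2) ^ (k+1))) := by
    have := multipliable_aux hq hq1 hzc2 hzc21
    apply this.congr
    intro k
    rw [key k]
  have h0 := tprod_eq_zero_mul' (f := fun k : ℕ => 1 - q ^ c * (q^2)^k) hm
  rw [qPochInf, qPochInf, h0]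
  simp only [pow_zero, mul_one]
  congr 1
  exact tprod_congr fun k => by rw [key k]

lemma qPochInf_pos {q z : ℝ} (hq : 0 < q) (hq1 : q < 1) (hz : 0 < z) (hz1 : z < 1) :
    0 < qPochInf z (q^2) := by
  have hfac : ∀ k : ℕ, 0 < 1 - z * (q^2)^k := by
    intro k
    have h1 : ((q:ℝ)^2)^k ≤ 1 := pow_le_one₀ (by positivity) (by nlinarith)
    nlinarith
  have hlog := summable_log_aux hq hq1 hz hz1
  have h : Real.exp (∑' k : ℕ, Real.log (1 - z * (q^2)^k)) = ∏' k : ℕ, (1 - z * (q^2)^k) :=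
    Real.rexp_tsum_eq_tprod (fun k => hfac k) hlog
  show 0 < ∏' k : ℕ, (1 - z * (q^2)^k)
  rw [← h]
  exact Real.exp_pos _

noncomputable def Jterm (q ν x : ℝ) (n : ℕ) : ℝ :=
  ((-1 : ℝ) ^ n * q ^ (n * (n + 1)) * x ^ (2 * (n : ℝ) + ν)) /
      (qPoch (q ^ 2) (q ^ 2) n *
        ∏ j ∈ Finset.range n, (1 - q ^ (2 * ν + 2 + 2 * (j : ℝ))))

lemma J3_eq (q ν x : ℝ) : J3 q ν x =
    (qPochInf (q ^ (2 * ν + 2)) (q ^ 2) / qPochInf (q ^ 2) (q ^ 2)) *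
      ∑' n : ℕ, Jterm q ν x n := rfl

lemma Jterm_norm {q ν x : ℝ} (hq : 0 < q) (hq1 : q < 1) (hν : -1 < ν) (hx : 0 < x) (n : ℕ) :
    ‖Jterm q ν x n‖ = (q ^ (n * (n + 1)) * x ^ (2 * (n : ℝ) + ν)) /
      (qPoch (q ^ 2) (q ^ 2) n *
        ∏ j ∈ Finset.range n, (1 - q ^ (2 * ν + 2 + 2 * (j : ℝ)))) := by
  have hnum : 0 < q ^ (n * (n + 1)) * x ^ (2 * (n : ℝ) + ν) := by
    have := Real.rpow_pos_of_pos hx (2 * (n : ℝ) + ν)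
    positivity
  have hden : 0 < qPoch (q ^ 2) (q ^ 2) n *
      ∏ j ∈ Finset.range n, (1 - q ^ (2 * ν + 2 + 2 * (j : ℝ))) :=
    mul_pos (qPoch_q2_pos hq hq1 n) (Rprod_pos hq hq1 hν n)
  rw [Jterm, Real.norm_eq_abs, abs_div, abs_of_pos hden]
  congr 1
  rw [abs_mul, abs_mul, abs_pow, abs_neg, abs_one, one_pow, one_mul,
    abs_of_pos (pow_pos hq _), abs_of_pos (Real.rpow_pos_of_pos hx _)]

lemma summable_Jterm {q ν x : ℝ} (hq : 0 < q) (hq1 : q < 1) (hν : -1 < ν) (hx : 0 < x) :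
    Summable (Jterm q ν x) := by
  have hq2 : (0:ℝ) < q ^ 2 := by positivity
  have hq21 : q ^ 2 < 1 := by nlinarith
  have hqv : q ^ (2*ν+2) < 1 := rpow_lt_one' hq hq1 (by linarith)
  have hqv0 : 0 < q ^ (2*ν+2) := Real.rpow_pos_of_pos hq _
  apply summable_of_ratio_norm_eventually_le (r := 1/2) (by norm_num)
  have htend : Filter.Tendsto
      (fun n : ℕ => (q^2)^n * (q^2 * x^2 / ((1 - q^2) * (1 - q ^ (2*ν+2)))))
      Filter.atTop (nhds 0) := by
    have := tendsto_pow_atTop_nhds_zero_of_lt_one hq2.le hq21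
    simpa using this.mul_const _
  filter_upwards [htend.eventually_lt_const (by norm_num : (0:ℝ) < 1/2)] with n hr
  set P := qPoch (q ^ 2) (q ^ 2) n with hP
  set R := ∏ j ∈ Finset.range n, (1 - q ^ (2 * ν + 2 + 2 * (j : ℝ))) with hR
  have hPpos : 0 < P := qPoch_q2_pos hq hq1 n
  have hRpos : 0 < R := Rprod_pos hq hq1 hν n
  have hen1 : 1 - q^2 ≤ 1 - q^2 * (q^2)^n := by
    have : q^2 * (q^2)^n ≤ q^2 * 1 :=
      mul_le_mul_of_nonneg_left (pow_le_one₀ hq2.le hq21.le) hq2.le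
    nlinarith
  have hen2 : 1 - q ^ (2*ν+2) ≤ 1 - q ^ (2 * ν + 2 + 2 * (n : ℝ)) := by
    have : q ^ (2 * ν + 2 + 2 * (n : ℝ)) ≤ q ^ (2*ν+2) := by
      apply Real.rpow_le_rpow_of_exponent_ge hq hq1.le
      have : (0:ℝ) ≤ (n:ℝ) := Nat.cast_nonneg n
      linarith
    linarith
  have hen1pos : 0 < 1 - q^2 := by linarith
  have hen2pos : 0 < 1 - q ^ (2*ν+2) := by linarith
  have he1 : 0 < 1 - q^2 * (q^2)^n := lt_of_lt_of_le hen1pos hen1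
  have he2 : 0 < 1 - q ^ (2 * ν + 2 + 2 * (n : ℝ)) := lt_of_lt_of_le hen2pos hen2
  rw [Jterm_norm hq hq1 hν hx, Jterm_norm hq hq1 hν hx]
  have hPstep : qPoch (q ^ 2) (q ^ 2) (n+1) = P * (1 - q^2 * (q^2)^n) := by
    rw [qPoch, Finset.prod_range_succ]; rfl
  have hRstep : (∏ j ∈ Finset.range (n+1), (1 - q ^ (2 * ν + 2 + 2 * (j : ℝ))))
      = R * (1 - q ^ (2 * ν + 2 + 2 * (n : ℝ))) := by
    rw [Finset.prod_range_succ]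
  have hAstep : q ^ ((n+1) * ((n+1) + 1)) * x ^ (2 * ((n+1 : ℕ) : ℝ) + ν)
      = (q ^ (n * (n + 1)) * x ^ (2 * (n : ℝ) + ν)) * (q^2 * (q^2)^n * x^2) := by
    have e1 : q ^ ((n+1) * ((n+1) + 1)) = q ^ (n * (n + 1)) * (q^2 * (q^2)^n) := by
      rw [← pow_mul q 2 n, ← pow_add, ← pow_add]
      congr 1
      ring
    have e2 : x ^ (2 * ((n+1 : ℕ) : ℝ) + ν) = x ^ (2 * (n : ℝ) + ν) * x^2 := by
      rw [← Real.rpow_natCast x 2, ← Real.rpow_add hx]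
      congr 1
      push_cast
      ring
    rw [e1, e2]; ring
  rw [hPstep, hRstep, hAstep]
  have hkey : q^2 * (q^2)^n * x^2 / ((1 - q^2 * (q^2)^n) * (1 - q ^ (2 * ν + 2 + 2 * (n : ℝ))))
      ≤ 1/2 := by
    have h1 : q^2 * (q^2)^n * x^2 / ((1 - q^2 * (q^2)^n) * (1 - q ^ (2 * ν + 2 + 2 * (n : ℝ))))
        ≤ q^2 * (q^2)^n * x^2 / ((1 - q^2) * (1 - q ^ (2*ν+2))) := by
      apply div_le_div_of_nonneg_left (by positivity) (mul_pos hen1pos hen2pos)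
      exact mul_le_mul hen1 hen2 hen2pos.le he1.le
    refine h1.trans ?_
    have : q^2 * (q^2)^n * x^2 / ((1 - q^2) * (1 - q ^ (2*ν+2)))
        = (q^2)^n * (q^2 * x^2 / ((1 - q^2) * (1 - q ^ (2*ν+2)))) := by ring
    rw [this]
    exact hr.le
  have hnum : 0 < q ^ (n * (n + 1)) * x ^ (2 * (n : ℝ) + ν) := by
    have := Real.rpow_pos_of_pos hx (2 * (n : ℝ) + ν)
    positivity
  have e3 : q ^ (n * (n + 1)) * x ^ (2 * (n : ℝ) + ν) * (q^2 * (q^2)^n * x^2) /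
        (P * (1 - q^2 * (q^2)^n) * (R * (1 - q ^ (2 * ν + 2 + 2 * (n : ℝ)))))
      = (q ^ (n * (n + 1)) * x ^ (2 * (n : ℝ) + ν) / (P * R)) *
        (q^2 * (q^2)^n * x^2 /
          ((1 - q^2 * (q^2)^n) * (1 - q ^ (2 * ν + 2 + 2 * (n : ℝ))))) := by
    rw [div_mul_div_comm]
    congr 1
    ring
  rw [e3]
  have h4 : (q ^ (n * (n + 1)) * x ^ (2 * (n : ℝ) + ν) / (P * R)) *
        (q^2 * (q^2)^n * x^2 /
          ((1 - q^2 * (q^2)^n) * (1 - q ^ (2 * ν + 2 + 2 * (n : ℝ)))))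
      ≤ (q ^ (n * (n + 1)) * x ^ (2 * (n : ℝ) + ν) / (P * R)) * (1/2) :=
    mul_le_mul_of_nonneg_left hkey (le_of_lt (div_pos hnum (mul_pos hPpos hRpos)))
  linarith

lemma Rstep {q ν : ℝ} (n : ℕ) :
    (∏ j ∈ Finset.range n, (1 - q ^ (2 * ν + 2 + 2 * (j : ℝ)))) *
      (1 - q ^ (2 * ν + 2 + 2 * (n : ℝ)))
    = (1 - q ^ (2 * ν + 2)) *
      ∏ j ∈ Finset.range n, (1 - q ^ (2 * (ν + 1) + 2 + 2 * (j : ℝ))) := by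
  rw [← Finset.prod_range_succ, Finset.prod_range_succ']
  have h0 : 2 * ν + 2 + 2 * ((0 : ℕ) : ℝ) = 2 * ν + 2 := by norm_num
  rw [h0, mul_comm]
  congr 1
  apply Finset.prod_congr rfl
  intro j _
  rw [show 2 * ν + 2 + 2 * (((j + 1 : ℕ)) : ℝ) = 2 * (ν + 1) + 2 + 2 * (j : ℝ) by
    push_cast; ring]

lemma lemA {q ν : ℝ} (hq : 0 < q) (hq1 : q < 1) (hν : -1 < ν) {x : ℝ} (hx : 0 < x) :
    x * J3 q ν x = J3 q (ν + 1) x - q ^ (ν + 1) * J3 q (ν + 1) (q * x) := by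
  have hqx : 0 < q * x := by positivity
  have hν1 : -1 < ν + 1 := by linarith
  have hsplit : qPochInf (q ^ (2 * ν + 2)) (q^2)
      = (1 - q ^ (2 * ν + 2)) * qPochInf (q ^ (2 * (ν + 1) + 2)) (q^2) := by
    have := qPochInf_split hq hq1 (q := q) (c := 2 * ν + 2) (by linarith)
    rwa [show (2 * ν + 2) + 2 = 2 * (ν + 1) + 2 by ring] at this
  rw [J3_eq, J3_eq, J3_eq]
  set Pinf := qPochInf (q ^ 2) (q ^ 2) with hPinf
  set A1 := qPochInf (q ^ (2 * (ν + 1) + 2)) (q^2) with hA1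
  -- move everything under single tsums
  rw [hsplit]
  have L : x * ((1 - q ^ (2*ν+2)) * A1 / Pinf * ∑' n : ℕ, Jterm q ν x n)
      = ∑' n : ℕ, ((1 - q ^ (2*ν+2)) * A1 / Pinf * (x * Jterm q ν x n)) := by
    rw [tsum_mul_left, tsum_mul_left]
    ring
  have R : ∑' n : ℕ, (A1/Pinf * Jterm q (ν+1) x n
        - q ^ ((ν:ℝ)+1) * (A1/Pinf * Jterm q (ν+1) (q*x) n))
      = A1/Pinf * (∑' n : ℕ, Jterm q (ν+1) x n)
        - q ^ ((ν:ℝ)+1) * (A1/Pinf * ∑' n : ℕ, Jterm q (ν+1) (q*x) n) := by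
    rw [Summable.tsum_sub ((summable_Jterm hq hq1 hν1 hx).mul_left _)
      (((summable_Jterm hq hq1 hν1 hqx).mul_left _).mul_left _),
      tsum_mul_left, tsum_mul_left, tsum_mul_left]
  rw [L, ← R]
  apply tsum_congr
  intro n
  -- now the per-term identity
  have hPn : 0 < qPoch (q^2) (q^2) n := qPoch_q2_pos hq hq1 n
  have hRν : 0 < ∏ j ∈ Finset.range n, (1 - q ^ (2 * ν + 2 + 2 * (j : ℝ))) :=
    Rprod_pos hq hq1 hν n
  have hRν1 : 0 < ∏ j ∈ Finset.range n, (1 - q ^ (2 * (ν+1) + 2 + 2 * (j : ℝ))) :=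
    Rprod_pos hq hq1 hν1 n
  have hPinfpos : 0 < Pinf := qPochInf_pos hq hq1 (by positivity) (by nlinarith)
  have hcross : qPochInf (q ^ (2 * ν + 2)) (q^2) *
      (∏ j ∈ Finset.range n, (1 - q ^ (2 * (ν+1) + 2 + 2 * (j : ℝ))))
      = A1 * (1 - q ^ (2 * ν + 2 + 2 * (n : ℝ))) *
        (∏ j ∈ Finset.range n, (1 - q ^ (2 * ν + 2 + 2 * (j : ℝ)))) := by
    rw [hsplit]
    linear_combination (-A1) * (Rstep (q := q) (ν := ν) n)
  -- rpow facts
  have f1 : x ^ (2 * (n : ℝ) + (ν + 1)) = x ^ (2 * (n : ℝ) + ν) * x := by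
    rw [show 2 * (n : ℝ) + (ν + 1) = (2 * (n : ℝ) + ν) + 1 by ring,
      Real.rpow_add hx, Real.rpow_one]
  have f2 : (q * x) ^ (2 * (n : ℝ) + (ν + 1))
      = q ^ (2 * (n : ℝ) + (ν + 1)) * x ^ (2 * (n : ℝ) + (ν + 1)) :=
    Real.mul_rpow hq.le hx.le
  have f3 : q ^ ((ν:ℝ) + 1) * q ^ (2 * (n : ℝ) + (ν + 1)) = q ^ (2 * ν + 2 + 2 * (n : ℝ)) := by
    rw [← Real.rpow_add hq]
    congr 1
    ring
  rw [Jterm, Jterm, Jterm, f1, f2, f1]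
  rw [hsplit] at hcross
  generalize (∏ j ∈ Finset.range n, (1 - q ^ (2 * (ν+1) + 2 + 2 * (j : ℝ)))) = R1 at hRν1 hcross ⊢
  generalize (∏ j ∈ Finset.range n, (1 - q ^ (2 * ν + 2 + 2 * (j : ℝ)))) = R0 at hRν hcross ⊢
  generalize q ^ (2 * (n : ℝ) + (ν + 1)) = Q1 at f3 ⊢
  generalize q ^ ((ν:ℝ) + 1) = Q0 at f3 ⊢
  generalize q ^ (2 * ν + 2 + 2 * (n : ℝ)) = Q2 at f3 hcross ⊢
  generalize q ^ (2 * ν + 2) = Q3 at hcross ⊢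
  generalize x ^ (2 * (n : ℝ) + ν) = X at hcross ⊢
  field_simp
  linear_combination X * hcross + X * A1 * R0 * f3

lemma lemB {q ν : ℝ} (hq : 0 < q) (hq1 : q < 1) (hν : -1 < ν) {x : ℝ} (hx : 0 < x) :
    q ^ (ν : ℝ) * J3 q ν (x / q) = J3 q ν x - x * J3 q (ν + 1) x := by
  have hxq : 0 < x / q := by positivity
  have hν1 : -1 < ν + 1 := by linarith
  have hsplit : qPochInf (q ^ (2 * ν + 2)) (q^2)
      = (1 - q ^ (2 * ν + 2)) * qPochInf (q ^ (2 * (ν + 1) + 2)) (q^2) := by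
    have := qPochInf_split hq hq1 (q := q) (c := 2 * ν + 2) (by linarith)
    rwa [show (2 * ν + 2) + 2 = 2 * (ν + 1) + 2 by ring] at this
  rw [J3_eq, J3_eq, J3_eq]
  set Pinf := qPochInf (q ^ 2) (q ^ 2) with hPinf
  set A0 := qPochInf (q ^ (2 * ν + 2)) (q^2) with hA0
  set A1 := qPochInf (q ^ (2 * (ν + 1) + 2)) (q^2) with hA1
  set g : ℕ → ℝ := fun n => ((-1 : ℝ) ^ n * q ^ (n * (n + 1)) * x ^ (2 * (n : ℝ) + ν) *
      (q ^ (-(2 * (n : ℝ))) - 1)) /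
      (qPoch (q ^ 2) (q ^ 2) n *
        ∏ j ∈ Finset.range n, (1 - q ^ (2 * ν + 2 + 2 * (j : ℝ)))) with hgdef
  have hgterm : ∀ n : ℕ, q ^ (ν:ℝ) * Jterm q ν (x/q) n - Jterm q ν x n = g n := by
    intro n
    rw [Jterm, Jterm, hgdef]
    have e1 : (x / q) ^ (2 * (n : ℝ) + ν) = x ^ (2 * (n : ℝ) + ν) / q ^ (2 * (n : ℝ) + ν) :=
      Real.div_rpow hx.le hq.le _
    have e2 : q ^ (ν:ℝ) * (x ^ (2 * (n : ℝ) + ν) / q ^ (2 * (n : ℝ) + ν))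
        = x ^ (2 * (n : ℝ) + ν) * q ^ (-(2 * (n : ℝ))) := by
      calc q ^ (ν:ℝ) * (x ^ (2 * (n : ℝ) + ν) / q ^ (2 * (n : ℝ) + ν))
          = x ^ (2 * (n : ℝ) + ν) * (q ^ (ν:ℝ) * (q ^ (2 * (n : ℝ) + ν))⁻¹) := by ring
        _ = x ^ (2 * (n : ℝ) + ν) * (q ^ (ν:ℝ) * q ^ (-(2 * (n : ℝ) + ν))) := by
            rw [← Real.rpow_neg hq.le]
        _ = x ^ (2 * (n : ℝ) + ν) * q ^ ((ν:ℝ) + -(2 * (n : ℝ) + ν)) := by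
            rw [← Real.rpow_add hq]
        _ = x ^ (2 * (n : ℝ) + ν) * q ^ (-(2 * (n : ℝ))) := by
            rw [show (ν:ℝ) + -(2 * (n : ℝ) + ν) = -(2 * (n : ℝ)) by ring]
    rw [e1, mul_div_assoc', div_sub_div_same]
    congr 1
    calc q ^ (ν:ℝ) * ((-1 : ℝ) ^ n * q ^ (n * (n + 1)) *
          (x ^ (2 * (n : ℝ) + ν) / q ^ (2 * (n : ℝ) + ν)))
        - (-1 : ℝ) ^ n * q ^ (n * (n + 1)) * x ^ (2 * (n : ℝ) + ν)
        = (-1 : ℝ) ^ n * q ^ (n * (n + 1)) *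
            (q ^ (ν:ℝ) * (x ^ (2 * (n : ℝ) + ν) / q ^ (2 * (n : ℝ) + ν)))
          - (-1 : ℝ) ^ n * q ^ (n * (n + 1)) * x ^ (2 * (n : ℝ) + ν) := by ring
      _ = ((-1 : ℝ) ^ n * q ^ (n * (n + 1)) * (x ^ (2 * (n : ℝ) + ν) * q ^ (-(2 * (n : ℝ)))))
          - (-1 : ℝ) ^ n * q ^ (n * (n + 1)) * x ^ (2 * (n : ℝ) + ν) := by rw [e2]
      _ = (-1 : ℝ) ^ n * q ^ (n * (n + 1)) * x ^ (2 * (n : ℝ) + ν) *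
          (q ^ (-(2 * (n : ℝ))) - 1) := by ring
  have hsum0 : Summable (Jterm q ν x) := summable_Jterm hq hq1 hν hx
  have hsum0' : Summable (Jterm q ν (x/q)) := summable_Jterm hq hq1 hν hxq
  have hsum1 : Summable (Jterm q (ν+1) x) := summable_Jterm hq hq1 hν1 hx
  have hgsum : Summable g :=
    Summable.congr ((hsum0'.mul_left (q ^ (ν:ℝ))).sub hsum0) hgterm
  have hg0 : g 0 = 0 := by
    simp [hgdef]
  have e0 : ∑' n, g n
      = q ^ (ν:ℝ) * (∑' n, Jterm q ν (x/q) n) - ∑' n, Jterm q ν x n := by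
    rw [← tsum_mul_left, ← Summable.tsum_sub (hsum0'.mul_left _) hsum0]
    exact tsum_congr fun n => (hgterm n).symm
  have e1 : ∑' n, g n = ∑' n, g (n+1) := by
    rw [Summable.tsum_eq_zero_add hgsum, hg0, zero_add]
  have keyterm : ∀ n : ℕ, (A0/Pinf) * g (n+1)
      = -(x * ((A1/Pinf) * Jterm q (ν+1) x n)) := by
    intro n
    have hPn : 0 < qPoch (q^2) (q^2) n := qPoch_q2_pos hq hq1 n
    have hRν : 0 < ∏ j ∈ Finset.range n, (1 - q ^ (2 * ν + 2 + 2 * (j : ℝ))) :=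
      Rprod_pos hq hq1 hν n
    have hRν1 : 0 < ∏ j ∈ Finset.range n, (1 - q ^ (2 * (ν+1) + 2 + 2 * (j : ℝ))) :=
      Rprod_pos hq hq1 hν1 n
    have hPinfpos : 0 < Pinf := qPochInf_pos hq hq1 (by positivity) (by nlinarith)
    have he1n : 0 < 1 - q^2 * (q^2)^n := by
      have h2 : (q^2 : ℝ)^n ≤ 1 := pow_le_one₀ (by positivity) (by nlinarith)
      nlinarith
    have hw : 0 < 1 - q ^ (2 * ν + 2 + 2 * (n : ℝ)) := by
      have : q ^ (2 * ν + 2 + 2 * (n : ℝ)) < 1 := by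
        apply rpow_lt_one' hq hq1
        have : (0:ℝ) ≤ (n:ℝ) := Nat.cast_nonneg n
        linarith
      linarith
    have hcross : A0 * (∏ j ∈ Finset.range n, (1 - q ^ (2 * (ν+1) + 2 + 2 * (j : ℝ))))
        = A1 * (1 - q ^ (2 * ν + 2 + 2 * (n : ℝ))) *
          (∏ j ∈ Finset.range n, (1 - q ^ (2 * ν + 2 + 2 * (j : ℝ)))) := by
      rw [hsplit]
      linear_combination (-A1) * (Rstep (q := q) (ν := ν) n)
    have p1 : q ^ ((n+1) * ((n+1) + 1)) * (q ^ (-(2 * ((n+1 : ℕ) : ℝ))) - 1)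
        = q ^ (n * (n + 1)) * (1 - q^2 * (q^2)^n) := by
      have h1 : q ^ ((n+1) * ((n+1)+1)) * q ^ (-(2 * ((n+1 : ℕ) : ℝ))) = q ^ (n * (n+1)) := by
        rw [← Real.rpow_natCast q ((n+1) * ((n+1)+1)), ← Real.rpow_natCast q (n * (n+1)),
          ← Real.rpow_add hq]
        congr 1
        push_cast
        ring
      have h2 : q ^ ((n+1) * ((n+1)+1)) = q ^ (n * (n+1)) * (q^2 * (q^2)^n) := by
        rw [← pow_mul q 2 n, ← pow_add, ← pow_add]
        congr 1
        ring
      calc q ^ ((n+1) * ((n+1)+1)) * (q ^ (-(2 * ((n+1 : ℕ) : ℝ))) - 1)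
          = q ^ ((n+1) * ((n+1)+1)) * q ^ (-(2 * ((n+1 : ℕ) : ℝ))) - q ^ ((n+1) * ((n+1)+1)) := by
            ring
        _ = q ^ (n * (n+1)) - q ^ (n * (n+1)) * (q^2 * (q^2)^n) := by rw [h1, h2]
        _ = q ^ (n * (n+1)) * (1 - q^2 * (q^2)^n) := by ring
    have p2 : x ^ (2 * ((n+1 : ℕ) : ℝ) + ν) = x ^ (2 * (n : ℝ) + ν) * x^2 := by
      rw [← Real.rpow_natCast x 2, ← Real.rpow_add hx]
      congr 1
      push_cast
      ring
    have p3 : qPoch (q^2) (q^2) (n+1) = qPoch (q^2) (q^2) n * (1 - q^2 * (q^2)^n) := by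
      rw [qPoch, Finset.prod_range_succ]
      rfl
    have p4 : (∏ j ∈ Finset.range (n+1), (1 - q ^ (2 * ν + 2 + 2 * (j : ℝ))))
        = (∏ j ∈ Finset.range n, (1 - q ^ (2 * ν + 2 + 2 * (j : ℝ)))) *
          (1 - q ^ (2 * ν + 2 + 2 * (n : ℝ))) := Finset.prod_range_succ _ _
    have f1 : x ^ (2 * (n : ℝ) + (ν + 1)) = x ^ (2 * (n : ℝ) + ν) * x := by
      rw [show 2 * (n : ℝ) + (ν + 1) = (2 * (n : ℝ) + ν) + 1 by ring,
        Real.rpow_add hx, Real.rpow_one]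
    have pnum : (-1 : ℝ) ^ (n+1) * q ^ ((n+1) * ((n+1) + 1)) * x ^ (2 * ((n+1 : ℕ) : ℝ) + ν) *
          (q ^ (-(2 * ((n+1 : ℕ) : ℝ))) - 1)
        = -((-1 : ℝ) ^ n * q ^ (n * (n+1)) * x ^ (2 * (n : ℝ) + ν) * x^2 *
            (1 - q^2 * (q^2)^n)) := by
      rw [p2]
      linear_combination ((-1 : ℝ) ^ (n+1) * x ^ (2 * (n : ℝ) + ν) * x^2) * p1
    rw [hgdef]
    simp only []
    rw [Jterm, p3, p4, f1, pnum]
    generalize (∏ j ∈ Finset.range n, (1 - q ^ (2 * (ν+1) + 2 + 2 * (j : ℝ)))) = R1 at hRν1 hcross ⊢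
    generalize (∏ j ∈ Finset.range n, (1 - q ^ (2 * ν + 2 + 2 * (j : ℝ)))) = R0 at hRν hcross ⊢
    generalize q ^ (2 * ν + 2 + 2 * (n : ℝ)) = Q2 at hw hcross ⊢
    generalize x ^ (2 * (n : ℝ) + ν) = X at hcross ⊢
    field_simp
    linear_combination (-X) * hcross
  have key : (A0/Pinf) * (∑' n, g n) = -(x * ((A1/Pinf) * ∑' n, Jterm q (ν+1) x n)) := by
    rw [e1, ← tsum_mul_left]
    have hnegsum : ∑' n, -(x * ((A1/Pinf) * Jterm q (ν+1) x n))
        = -(x * ((A1/Pinf) * ∑' n, Jterm q (ν+1) x n)) := by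
      rw [tsum_neg, tsum_mul_left, tsum_mul_left]
    rw [← hnegsum]
    exact tsum_congr keyterm
  rw [e0] at key
  linear_combination key

/-- Indefinite q-integral of a product of two third Jackson q-Bessel functions. -/
theorem qIntegral_J3_product (q μ ν : ℝ) (hq : 0 < q) (hq1 : q < 1)
    (hμ : -1 < μ) (hν : -1 < ν) :
    ∀ x : ℝ, 0 < x →
      qDeriv q
        (fun t => (qBracket q μ - qBracket q ν) * J3 q ν (t / q) * J3 q μ (t / q)
          + t / (1 - q) *
            (J3 q (ν + 1) t * J3 q μ (t / q) - J3 q ν (t / q) * J3 q (μ + 1) t)) x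
      = x * (q ^ (-ν) * qBracket q (ν - μ) / (1 - q)
            + (q ^ (-μ) * (qBracket q μ) ^ 2 - q ^ (-ν) * (qBracket q ν) ^ 2) / x ^ 2)
          * J3 q ν x * J3 q μ x := by
  intro x hx
  have hq' : q ≠ 0 := hq.ne'
  have h1q : (1:ℝ) - q ≠ 0 := by intro h; nlinarith
  have hE : 0 < q ^ (ν:ℝ) := Real.rpow_pos_of_pos hq ν
  have hF : 0 < q ^ (μ:ℝ) := Real.rpow_pos_of_pos hq μ
  have hu' : J3 q ν (x/q) = (q ^ (ν:ℝ))⁻¹ * (J3 q ν x - x * J3 q (ν+1) x) := by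
    rw [← lemB hq hq1 hν hx]
    field_simp
  have hv' : J3 q μ (x/q) = (q ^ (μ:ℝ))⁻¹ * (J3 q μ x - x * J3 q (μ+1) x) := by
    rw [← lemB hq hq1 hμ hx]
    field_simp
  have hw1 : J3 q (ν+1) (q*x) = (q ^ (ν:ℝ) * q)⁻¹ * (J3 q (ν+1) x - x * J3 q ν x) := by
    have h := lemA hq hq1 hν hx
    rw [Real.rpow_add_one hq' ν] at h
    have hEq : q ^ (ν:ℝ) * q ≠ 0 := by positivity
    field_simp
    linear_combination h
  have hw2 : J3 q (μ+1) (q*x) = (q ^ (μ:ℝ) * q)⁻¹ * (J3 q (μ+1) x - x * J3 q μ x) := by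
    have h := lemA hq hq1 hμ hx
    rw [Real.rpow_add_one hq' μ] at h
    field_simp
    linear_combination h
  simp only [qDeriv]
  rw [mul_div_cancel_left₀ x hq']
  rw [hu', hv', hw1, hw2]
  simp only [qBracket]
  rw [Real.rpow_neg hq.le, Real.rpow_neg hq.le, Real.rpow_sub hq]
  field_simp
  ring
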